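/- Suppose n = 2m+1 with m ≥ 0. Then, with N the μ̃_{2m+1} × μ̃_{2m+1} regular nilpotent matrix, one has (𝟏 − N) · ∏_{k=1}^{m} ( ∑_{j=0}^{a_{2k}−1} N^{j·d_{2k−1}} ) = χ_{2m+1}; equivalently, φ_{2m+1}(N) · (𝟏 − N) · ∏_{k=1}^{m} ( ∑_{j=0}^{a_{2k}−1} N^{j·d_{2k−1}} ) = 𝟏. -/

import Mathlib

open Finset Matrix Polynomial FreeAbelianGroup

/-- `d k = a 1 * a 2 * ⋯ * a k`, with `d 0 = 1`. -/
def chainD (a : ℕ → ℕ) (k : ℕ) : ℕ := ∏ i ∈ Finset.Icc 1 k, a i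

/-- `μ̃ 0 = 1`, `μ̃ k = d k - μ̃ (k-1)`. -/
def chainMu (a : ℕ → ℕ) : ℕ → ℤ
  | 0 => 1
  | k + 1 => (chainD a (k + 1) : ℤ) - chainMu a k

/-- `φ_n(t) = ∏_{i=0}^{n} (1 - t^{d_i})^{(-1)^{n-i}}` as a rational function over `ℚ`. -/
noncomputable def chainPhi (a : ℕ → ℕ) (n : ℕ) : RatFunc ℚ :=
  ∏ i ∈ Finset.range (n + 1),
    ((1 : RatFunc ℚ) - RatFunc.X ^ (chainD a i)) ^ ((-1 : ℤ) ^ (n - i))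

/-- the regular nilpotent `μ × μ` matrix -/
def nilpN (μ : ℕ) : Matrix (Fin μ) (Fin μ) ℚ :=
  Matrix.of fun i j => if (j : ℕ) = (i : ℕ) + 1 then 1 else 0

/-- `χ = ∑_{i=0}^{μ-1} c_i N^i` -/
noncomputable def chiMat (μ : ℕ) (c : ℕ → ℚ) : Matrix (Fin μ) (Fin μ) ℚ :=
  ∑ i ∈ Finset.range μ, c i • (nilpN μ) ^ i

/-- the companion-type matrix `M₁`: `(M₁)_{i,1} = -c'_i`, `(M₁)_{i,i+1} = 1` (1-based). -/
def M1mat (μ : ℕ) (c' : ℕ → ℚ) : Matrix (Fin μ) (Fin μ) ℚ :=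
  Matrix.of fun i j =>
    (if (j : ℕ) = 0 then -c' ((i : ℕ) + 1) else 0) +
    (if (j : ℕ) = (i : ℕ) + 1 then 1 else 0)

lemma nilpN_pow (μ k : ℕ) :
    (nilpN μ) ^ k = Matrix.of (fun i j : Fin μ => if (j : ℕ) = (i : ℕ) + k then (1:ℚ) else 0) := by
  induction k with
  | zero =>
    ext i j
    simp [Matrix.one_apply, Fin.ext_iff, eq_comm]
  | succ k ih =>
    rw [pow_succ, ih]
    ext i j
    simp only [Matrix.mul_apply, Matrix.of_apply, nilpN, ite_mul, one_mul, zero_mul]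
    by_cases h : (j : ℕ) = (i : ℕ) + (k + 1)
    · rw [if_pos h]
      have hik : (i : ℕ) + k < μ := by have := j.isLt; omega
      rw [Finset.sum_eq_single (⟨(i:ℕ)+k, hik⟩ : Fin μ)]
      · simp only [if_pos rfl, Fin.val_mk]
        have hj : (j:ℕ) = (i:ℕ) + k + 1 := by omega
        rw [if_pos hj]
        simp
      · intro b _ hb
        rw [if_neg]
        intro hbe; exact hb (by apply Fin.ext; simpa using hbe)
      · intro hmem; exact absurd (Finset.mem_univ _) hmem
    · rw [if_neg h]
      apply Finset.sum_eq_zero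
      intro b _
      by_cases hb : (b : ℕ) = (i : ℕ) + k
      · rw [if_pos hb, if_neg]; intro hj; exact h (by omega)
      · rw [if_neg hb]

lemma nilpN_pow_zero (μ k : ℕ) (hk : μ ≤ k) : (nilpN μ) ^ k = 0 := by
  rw [nilpN_pow]
  ext i j
  simp only [Matrix.of_apply, Matrix.zero_apply, ite_eq_right_iff]
  intro h
  have := j.isLt
  omega



lemma chainD_zero (a : ℕ → ℕ) : chainD a 0 = 1 := by simp [chainD]

lemma chainD_succ (a : ℕ → ℕ) (k : ℕ) : chainD a (k+1) = chainD a k * a (k+1) := by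
  rw [chainD, chainD, ← Finset.prod_Icc_succ_top (by omega : 1 ≤ k + 1)]

lemma chainD_pos (a : ℕ → ℕ) (k : ℕ) (ha : ∀ i, 1 ≤ i → i ≤ k → 1 ≤ a i) :
    1 ≤ chainD a k := by
  apply Nat.one_le_iff_ne_zero.mpr
  rw [chainD, Finset.prod_ne_zero_iff]
  intro i hi
  simp only [Finset.mem_Icc] at hi
  exact Nat.one_le_iff_ne_zero.mp (ha i hi.1 hi.2)

lemma chainMu_bounds (a : ℕ → ℕ) (k : ℕ) (ha : ∀ i, 1 ≤ i → i ≤ k → 1 ≤ a i) :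
    0 ≤ chainMu a k ∧ chainMu a k ≤ chainD a k := by
  induction k with
  | zero => simp [chainMu, chainD_zero]
  | succ k ih =>
    have ha' : ∀ i, 1 ≤ i → i ≤ k → 1 ≤ a i := fun i h1 h2 => ha i h1 (by omega)
    obtain ⟨h0, h1⟩ := ih ha'
    have hd : chainD a k ≤ chainD a (k+1) := by
      rw [chainD_succ]
      have := ha (k+1) (by omega) (by omega)
      nlinarith [chainD_pos a k ha']
    constructor
    · simp only [chainMu]
      have : (chainD a k : ℤ) ≤ (chainD a (k+1) : ℤ) := by exact_mod_cast hd
      omega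
    · simp only [chainMu]; omega

lemma one_sub_X_pow_ne_zero (d : ℕ) (hd : 1 ≤ d) : (1 : ℚ[X]) - X^d ≠ 0 := by
  intro h
  have := congrArg (fun q => Polynomial.coeff q d) h
  simp only [coeff_sub, coeff_one, coeff_X_pow, if_neg (by omega : ¬ d = 0), if_pos rfl,
    coeff_zero] at this
  norm_num at this

lemma geom_poly (d b : ℕ) :
    ((1 : ℚ[X]) - X^d) * (∑ j ∈ Finset.range b, X ^ (j * d)) = 1 - X ^ (b * d) := by
  have h := geom_sum_mul (X^d : ℚ[X]) b
  have h2 : ∀ j, ((X:ℚ[X])^d)^j = X ^ (j*d) := by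
    intro j; rw [← pow_mul, Nat.mul_comm]
  simp only [h2] at h
  have := congrArg (fun q : ℚ[X] => -q) h
  simp only [neg_mul_eq_mul_neg, neg_sub] at this
  rw [mul_comm] at this
  exact this

lemma ratfunc_F (d : ℕ) :
    (1 : RatFunc ℚ) - RatFunc.X ^ d = algebraMap (Polynomial ℚ) (RatFunc ℚ) (1 - X ^ d) := by
  simp [map_sub, map_pow, RatFunc.algebraMap_X]

lemma chainPhi_step (a : ℕ → ℕ) (n : ℕ) :
    chainPhi a (n + 2) = chainPhi a n
      * ((1 : RatFunc ℚ) - RatFunc.X ^ (chainD a (n+1)))⁻¹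
      * ((1 : RatFunc ℚ) - RatFunc.X ^ (chainD a (n+2))) := by
  unfold chainPhi
  rw [show n + 2 + 1 = (n + 2) + 1 from rfl, Finset.prod_range_succ, Finset.prod_range_succ]
  congr 2
  · apply Finset.prod_congr rfl
    intro i hi
    simp only [Finset.mem_range] at hi
    congr 1
    rw [show n + 2 - i = (n - i) + 2 from by omega, pow_add]
    norm_num
  · rw [show n + 2 - (n + 1) = 1 from by omega]
    norm_num
  · rw [Nat.sub_self]
    norm_num

noncomputable def gpoly (a : ℕ → ℕ) (k : ℕ) : ℚ[X] :=
  ∑ j ∈ Finset.range (a (2*k+2)), X ^ (j * chainD a (2*k+1))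

noncomputable def qpoly (a : ℕ → ℕ) (m : ℕ) : ℚ[X] :=
  (1 - X) * ∏ k ∈ Finset.range m, gpoly a k

lemma F_ne_zero (d : ℕ) (hd : 1 ≤ d) :
    (1 : RatFunc ℚ) - RatFunc.X ^ d ≠ 0 := by
  rw [ratfunc_F]
  intro h
  exact one_sub_X_pow_ne_zero d hd (RatFunc.algebraMap_injective ℚ (by simpa using h))

lemma key_identity (a : ℕ → ℕ) (m : ℕ)
    (ha : ∀ i, 1 ≤ i → i ≤ 2*m+1 → 1 ≤ a i) :
    chainPhi a (2*m+1) * algebraMap (Polynomial ℚ) (RatFunc ℚ) (qpoly a m)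
      = algebraMap (Polynomial ℚ) (RatFunc ℚ) (1 - X ^ chainD a (2*m+1)) := by
  induction m with
  | zero =>
    have hF0 : (1 : RatFunc ℚ) - RatFunc.X ^ (chainD a 0) ≠ 0 :=
      F_ne_zero _ (by rw [chainD_zero])
    unfold chainPhi qpoly
    rw [Finset.prod_range_succ, Finset.prod_range_succ, Finset.prod_range_zero]
    simp only [Finset.prod_range_zero, mul_one, Nat.sub_self, pow_zero, zpow_one]
    rw [show (2*0+1) - 0 = 1 from rfl, pow_one, _root_.zpow_neg, zpow_one]
    rw [chainD_zero, pow_one]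
    rw [chainD_zero, pow_one] at hF0
    rw [← ratfunc_F (chainD a (2*0+1)),
      show (algebraMap ℚ[X] (RatFunc ℚ)) ((1:ℚ[X]) - X) = (1:RatFunc ℚ) - RatFunc.X from by
        simpa using (ratfunc_F 1).symm]
    field_simp
  | succ m ih =>
    have ha' : ∀ i, 1 ≤ i → i ≤ 2*m+1 → 1 ≤ a i := fun i h1 h2 => ha i h1 (by omega)
    have hd1 : 1 ≤ chainD a (2*m+2) :=
      chainD_pos a _ (fun i h1 h2 => ha i h1 (by omega))
    have hF : (1 : RatFunc ℚ) - RatFunc.X ^ (chainD a (2*m+2)) ≠ 0 := F_ne_zero _ hd1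
    have hgeom : ((1:ℚ[X]) - X ^ chainD a (2*m+1)) * gpoly a m
        = 1 - X ^ chainD a (2*m+2) := by
      rw [gpoly, geom_poly]
      have he : chainD a (2*m+2) = chainD a (2*m+1) * a (2*m+2) := chainD_succ a (2*m+1)
      rw [he, Nat.mul_comm]
    have h23 : 2*(m+1)+1 = (2*m+1) + 2 := by omega
    rw [h23, chainPhi_step]
    have hq : qpoly a (m+1) = qpoly a m * gpoly a m := by
      rw [qpoly, qpoly, Finset.prod_range_succ, mul_assoc]
    rw [hq, _root_.map_mul, show (2*m+1)+1 = 2*m+2 from rfl, show (2*m+1)+2 = 2*m+3 from rfl]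
    calc chainPhi a (2*m+1) * (1 - RatFunc.X ^ chainD a (2*m+2))⁻¹
          * (1 - RatFunc.X ^ chainD a (2*m+3))
          * (algebraMap ℚ[X] (RatFunc ℚ) (qpoly a m) * algebraMap ℚ[X] (RatFunc ℚ) (gpoly a m))
        = (chainPhi a (2*m+1) * algebraMap ℚ[X] (RatFunc ℚ) (qpoly a m))
          * algebraMap ℚ[X] (RatFunc ℚ) (gpoly a m)
          * (1 - RatFunc.X ^ chainD a (2*m+2))⁻¹
          * (1 - RatFunc.X ^ chainD a (2*m+3)) := by ring
      _ = algebraMap ℚ[X] (RatFunc ℚ) ((1 - X ^ chainD a (2*m+1)) * gpoly a m)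
          * (1 - RatFunc.X ^ chainD a (2*m+2))⁻¹
          * (1 - RatFunc.X ^ chainD a (2*m+3)) := by rw [ih ha', ← _root_.map_mul]
      _ = (1 - RatFunc.X ^ chainD a (2*m+2))
          * (1 - RatFunc.X ^ chainD a (2*m+2))⁻¹
          * (1 - RatFunc.X ^ chainD a (2*m+3)) := by rw [hgeom, ← ratfunc_F]
      _ = (1 - RatFunc.X ^ chainD a (2*m+3)) := by
          rw [mul_inv_cancel₀ hF, one_mul]
      _ = algebraMap ℚ[X] (RatFunc ℚ) (1 - X ^ chainD a (2*m+3)) := ratfunc_F _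

lemma listProd_eq (a : ℕ → ℕ) (μ : ℕ) (m : ℕ) :
    ((List.range m).map (fun k =>
        ∑ j ∈ Finset.range (a (2 * k + 2)),
          (nilpN μ) ^ (j * chainD a (2 * k + 1)))).prod
      = Polynomial.aeval (nilpN μ) (∏ k ∈ Finset.range m, gpoly a k) := by
  induction m with
  | zero => simp
  | succ m ih =>
    rw [List.range_succ, List.map_append, List.prod_append, Finset.prod_range_succ,
      _root_.map_mul, ih]
    simp only [List.map_cons, List.map_nil, List.prod_cons, List.prod_nil, mul_one]
    congr 1
    rw [gpoly, map_sum]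
    simp [aeval_X_pow]

/-- for `n = 2m+1`, `m ≥ 0`:
`(𝟏 − N) · ∏_{k=1}^{m} (∑_{j=0}^{a_{2k}−1} N^{j·d_{2k−1}}) = χ_{2m+1}`; equivalently
`φ_{2m+1}(N) · (𝟏 − N) · ∏_{k=1}^{m} (∑_{j=0}^{a_{2k}−1} N^{j·d_{2k−1}}) = 𝟏`.
(The product over `k = 1, …, m` is reindexed as `k = 0, …, m−1`, taken as an ordered
list product since matrices a priori need not commute.) -/
theorem stmt_10 (m : ℕ) (n : ℕ) (hn : n = 2 * m + 1)
    (a : ℕ → ℕ) (ha : ∀ i, 1 ≤ i → i ≤ n → 2 ≤ a i)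
    (p : Polynomial ℚ)
    (hp : algebraMap (Polynomial ℚ) (RatFunc ℚ) p = chainPhi a n)
    (c : ℕ → ℚ)
    (hc : ∀ i, c i = PowerSeries.coeff (R := ℚ) i ((p : PowerSeries ℚ)⁻¹)) :
    (1 - nilpN (chainMu a n).toNat) *
        ((List.range m).map (fun k =>
          ∑ j ∈ Finset.range (a (2 * k + 2)),
            (nilpN (chainMu a n).toNat) ^ (j * chainD a (2 * k + 1)))).prod
      = chiMat (chainMu a n).toNat c ∧
    Polynomial.aeval (nilpN (chainMu a n).toNat) p *
        ((1 - nilpN (chainMu a n).toNat) *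
          ((List.range m).map (fun k =>
            ∑ j ∈ Finset.range (a (2 * k + 2)),
              (nilpN (chainMu a n).toNat) ^ (j * chainD a (2 * k + 1)))).prod)
      = 1 := by
  subst hn
  set n := 2 * m + 1 with hn
  have ha1 : ∀ i, 1 ≤ i → i ≤ n → 1 ≤ a i := fun i h1 h2 => le_trans (by norm_num) (ha i h1 h2)
  set μ : ℕ := (chainMu a n).toNat with hμ
  set N : Matrix (Fin μ) (Fin μ) ℚ := nilpN μ with hN
  -- polynomial identity
  have hpq : p * qpoly a m = 1 - X ^ chainD a n := by
    apply RatFunc.algebraMap_injective ℚ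
    rw [_root_.map_mul, hp, key_identity a m ha1]
  -- μ ≤ chainD a n
  have hμd : μ ≤ chainD a n := by
    have h := (chainMu_bounds a n ha1).2
    exact Int.toNat_le.mpr h
  have hNd : N ^ (chainD a n) = 0 := nilpN_pow_zero μ _ hμd
  -- evaluation of hpq at N
  have haq : Polynomial.aeval N p * Polynomial.aeval N (qpoly a m) = 1 := by
    have h0 := congrArg (Polynomial.aeval N) hpq
    rw [_root_.map_mul, map_sub, _root_.map_one, aeval_X_pow, hNd, sub_zero] at h0
    exact h0
  -- (1 - N) * list product = aeval N (qpoly a m)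
  have hlist : (1 - N) *
      ((List.range m).map (fun k =>
        ∑ j ∈ Finset.range (a (2 * k + 2)), N ^ (j * chainD a (2 * k + 1)))).prod
      = Polynomial.aeval N (qpoly a m) := by
    rw [listProd_eq, qpoly, _root_.map_mul, map_sub, _root_.map_one, aeval_X]
  -- power series: c i = (qpoly a m).coeff i for i < chainD a n
  have hc' : ∀ i, i < chainD a n → c i = (qpoly a m).coeff i := by
    intro i hi
    have hPQ : (p : PowerSeries ℚ) * ((qpoly a m : ℚ[X]) : PowerSeries ℚ)
        = 1 - (PowerSeries.X) ^ (chainD a n) := by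
      rw [← Polynomial.coe_mul, hpq]
      push_cast
      rfl
    have hP0 : PowerSeries.constantCoeff (p : PowerSeries ℚ) ≠ 0 := by
      have h0 := congrArg (fun q : ℚ[X] => q.coeff 0) hpq
      simp only [Polynomial.mul_coeff_zero, Polynomial.coeff_sub, Polynomial.coeff_one,
        Polynomial.coeff_X_pow] at h0
      rw [Polynomial.constantCoeff_coe]
      intro hz
      rw [hz, zero_mul] at h0
      have hd1 : 1 ≤ chainD a n := chainD_pos a n ha1
      rw [if_neg (by omega : ¬ (0 : ℕ) = chainD a n)] at h0
      norm_num at h0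
    have hinv : (p : PowerSeries ℚ) * ((p : PowerSeries ℚ))⁻¹ = 1 :=
      PowerSeries.mul_inv_cancel _ hP0
    have hdiff : ((p : PowerSeries ℚ))⁻¹ - ((qpoly a m : ℚ[X]) : PowerSeries ℚ)
        = ((p : PowerSeries ℚ))⁻¹ * (PowerSeries.X) ^ (chainD a n) := by
      have hQ : ((qpoly a m : ℚ[X]) : PowerSeries ℚ)
          = ((p : PowerSeries ℚ))⁻¹
            * ((p : PowerSeries ℚ) * ((qpoly a m : ℚ[X]) : PowerSeries ℚ)) := by
        rw [← mul_assoc, mul_comm (((p : PowerSeries ℚ))⁻¹) _, hinv, one_mul]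
      rw [hPQ] at hQ
      rw [hQ]; ring
    have h1 := congrArg (PowerSeries.coeff (R := ℚ) i) hdiff
    rw [map_sub, PowerSeries.coeff_mul_X_pow', if_neg (by omega : ¬ chainD a n ≤ i)] at h1
    rw [hc i, ← Polynomial.coeff_coe (R := ℚ)]
    linarith [h1]
  -- chiMat = aeval N (qpoly a m)
  have hchi : chiMat μ c = Polynomial.aeval N (qpoly a m) := by
    rw [chiMat, Polynomial.aeval_eq_sum_range]
    have h1 : ∀ i ∈ Finset.range μ, c i • (nilpN μ) ^ i = (qpoly a m).coeff i • N ^ i := by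
      intro i hi
      rw [hc' i (lt_of_lt_of_le (Finset.mem_range.mp hi) hμd)]
    rw [Finset.sum_congr rfl h1]
    rw [show (∑ i ∈ Finset.range μ, (qpoly a m).coeff i • N ^ i)
        = ∑ i ∈ Finset.range (max μ ((qpoly a m).natDegree + 1)),
            (qpoly a m).coeff i • N ^ i from
      Finset.sum_subset (Finset.range_subset_range.mpr (le_max_left _ _)) (by
        intro i _ hi
        rw [hN, nilpN_pow_zero μ i (by simp at hi; omega), smul_zero])]
    exact (Finset.sum_subset (Finset.range_subset_range.mpr (le_max_right _ _)) (by
      intro i _ hi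
      rw [Polynomial.coeff_eq_zero_of_natDegree_lt (by simp at hi; omega), zero_smul])).symm
  exact ⟨by rw [hlist, hchi], by rw [hlist, haq]⟩
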